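/- (n = 2 case of the main theorem) Let 𝔈_1^A, 𝔈_2^A : L(H_A) → L(H_A) and 𝔈_1^B, 𝔈_2^B : L(H_B) → L(H_B) be maps that are either all complex-linear or all conjugate-linear, satisfying for some ε^A, ε^B ≥ 0: ‖𝔈_1^A(σ_1)‖_HS² + ‖𝔈_2^A(σ_2)‖_HS² ≤ 2ε^A for all density operators σ_1, σ_2 on H_A, and the analogous bound with ε^B on H_B. Define, for a state ρ with marginals ρ_A, ρ_B, the operator 𝔈(ρ) := (1/2)(𝔈_1^A ⊗ 𝔈_1^B + 𝔈_2^A ⊗ 𝔈_2^B)(ρ) + (1/2)(𝔈_1^A ⊗ 𝔈_2^B + 𝔈_2^A ⊗ 𝔈_1^B)(ρ_A ⊗ ρ_B). Then for every separable state ρ: ‖𝔈(ρ)‖_CCN ≤ √(ε^A + (1/2)(⟨𝔈_1^A(ρ_A), 𝔈_2^A(ρ_A)⟩_HS + conj.)) · √(ε^B + (1/2)(⟨𝔈_1^B(ρ_B), 𝔈_2^B(ρ_B)⟩_HS + conj.)). -/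

import Mathlib

open scoped Kronecker ComplexOrder
open Matrix Finset

/-- Hilbert-Schmidt inner product on matrices. -/
noncomputable def hsInner {n : Type*} [Fintype n] (A B : Matrix n n ℂ) : ℂ :=
  (Aᴴ * B).trace

/-- Hilbert-Schmidt norm. -/
noncomputable def hsNorm {n : Type*} [Fintype n] (A : Matrix n n ℂ) : ℝ :=
  Real.sqrt (hsInner A A).re

/-- A density operator: positive semidefinite with unit trace. -/
def IsDensity {n : Type*} [Fintype n] (ρ : Matrix n n ℂ) : Prop :=
  ρ.PosSemidef ∧ ρ.trace = 1

/-- A separable bipartite state: a convex combination of product density operators. -/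
def IsSeparableState {NA NB : ℕ} (ρ : Matrix (Fin NA × Fin NB) (Fin NA × Fin NB) ℂ) : Prop :=
  ∃ (m : ℕ) (p : Fin m → ℝ)
    (ρA : Fin m → Matrix (Fin NA) (Fin NA) ℂ) (ρB : Fin m → Matrix (Fin NB) (Fin NB) ℂ),
    (∀ i, 0 < p i) ∧ (∑ i, p i = 1) ∧ (∀ i, IsDensity (ρA i)) ∧ (∀ i, IsDensity (ρB i)) ∧
    ρ = ∑ i, (p i : ℂ) • (ρA i ⊗ₖ ρB i)

/-- The computable cross norm (CCN) on bipartite operators. -/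
noncomputable def ccn {NA NB : ℕ} (C : Matrix (Fin NA × Fin NB) (Fin NA × Fin NB) ℂ) : ℝ :=
  sInf { r : ℝ | ∃ (n : ℕ) (A : Fin n → Matrix (Fin NA) (Fin NA) ℂ)
    (B : Fin n → Matrix (Fin NB) (Fin NB) ℂ),
    C = ∑ k, A k ⊗ₖ B k ∧ r = ∑ k, hsNorm (A k) * hsNorm (B k) }

/-- The action of the tensor product `F ⊗ G` of two (jointly linear or conjugate-linear)
superoperators on a bipartite operator, written in terms of matrix blocks. -/
noncomputable def tensorApply {NA NB : ℕ} {σ : ℂ →+* ℂ}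
    (F : Matrix (Fin NA) (Fin NA) ℂ →ₛₗ[σ] Matrix (Fin NA) (Fin NA) ℂ)
    (G : Matrix (Fin NB) (Fin NB) ℂ →ₛₗ[σ] Matrix (Fin NB) (Fin NB) ℂ)
    (M : Matrix (Fin NA × Fin NB) (Fin NA × Fin NB) ℂ) :
    Matrix (Fin NA × Fin NB) (Fin NA × Fin NB) ℂ :=
  ∑ b : Fin NB, ∑ b' : Fin NB,
    (F (Matrix.of fun i i' => M (i, b) (i', b'))) ⊗ₖ (G (Matrix.single b b' 1))

/-- The marginal (reduced density operator) of a bipartite operator on the A-side. -/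
noncomputable def margA {NA NB : ℕ} (ρ : Matrix (Fin NA × Fin NB) (Fin NA × Fin NB) ℂ) :
    Matrix (Fin NA) (Fin NA) ℂ :=
  Matrix.of fun i i' => ∑ b : Fin NB, ρ (i, b) (i', b)

/-- The marginal (reduced density operator) of a bipartite operator on the B-side. -/
noncomputable def margB {NA NB : ℕ} (ρ : Matrix (Fin NA × Fin NB) (Fin NA × Fin NB) ℂ) :
    Matrix (Fin NB) (Fin NB) ℂ :=
  Matrix.of fun b b' => ∑ i : Fin NA, ρ (i, b) (i, b')

/-! ### Auxiliary material -/

set_option linter.unusedSectionVars false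

section EM
variable {n : Type*} [Fintype n]

/-- Embedding of matrices into a Euclidean space, identifying the HS structure. -/
noncomputable def eM (A : Matrix n n ℂ) : EuclideanSpace ℂ (n × n) :=
  WithLp.toLp 2 (fun p : n × n => A p.1 p.2)

lemma hsInner_eM (A B : Matrix n n ℂ) : hsInner A B = inner ℂ (eM A) (eM B) := by
  simp only [hsInner, Matrix.trace, Matrix.diag, Matrix.mul_apply, PiLp.inner_apply,
    RCLike.inner_apply, eM, Matrix.conjTranspose_apply]
  rw [Finset.sum_comm]
  simp [Fintype.sum_prod_type, mul_comm]

lemma hsNorm_eM (A : Matrix n n ℂ) : hsNorm A = ‖eM A‖ := by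
  rw [hsNorm, hsInner_eM]
  rw [show (inner ℂ (eM A) (eM A)).re = RCLike.re (inner ℂ (eM A) (eM A)) from rfl,
    inner_self_eq_norm_sq, Real.sqrt_sq (norm_nonneg _)]

lemma eM_add (A B : Matrix n n ℂ) : eM (A + B) = eM A + eM B := rfl
lemma eM_smul (c : ℂ) (A : Matrix n n ℂ) : eM (c • A) = c • eM A := rfl
lemma eM_sub (A B : Matrix n n ℂ) : eM (A - B) = eM A - eM B := rfl

lemma eM_sum {ι : Type*} (s : Finset ι) (f : ι → Matrix n n ℂ) :
    eM (∑ i ∈ s, f i) = ∑ i ∈ s, eM (f i) := by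
  induction s using Finset.cons_induction with
  | empty => rfl
  | cons a s ha ih => rw [Finset.sum_cons, Finset.sum_cons, ← ih]; rfl

lemma hsNorm_nonneg (A : Matrix n n ℂ) : 0 ≤ hsNorm A := Real.sqrt_nonneg _

lemma hsNorm_smul_real (r : ℝ) (hr : 0 ≤ r) (A : Matrix n n ℂ) :
    hsNorm ((r : ℂ) • A) = r * hsNorm A := by
  rw [hsNorm_eM, hsNorm_eM, eM_smul, norm_smul, Complex.norm_real, Real.norm_eq_abs,
    abs_of_nonneg hr]

end EM

local notation "⟪" x ", " y "⟫" => @inner ℂ _ _ x y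

lemma re_inner_sum {E : Type*} [NormedAddCommGroup E] [InnerProductSpace ℂ E]
    {m : ℕ} (p q : Fin m → ℝ) (u v : Fin m → E) :
    (⟪∑ i, (p i : ℂ) • u i, ∑ j, (q j : ℂ) • v j⟫).re
      = ∑ i, ∑ j, p i * q j * (⟪u i, v j⟫).re := by
  rw [sum_inner, Complex.re_sum]
  refine Finset.sum_congr rfl fun i _ => ?_
  rw [inner_smul_left, Complex.conj_ofReal, inner_sum, Finset.mul_sum, Complex.re_sum]
  refine Finset.sum_congr rfl fun j _ => ?_
  rw [inner_smul_right, ← mul_assoc, ← Complex.ofReal_mul, Complex.re_ofReal_mul]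

lemma double_sum_eq {m : ℕ} (p : Fin m → ℝ) (hp1 : ∑ i, p i = 1)
    (u : Fin m → ℝ) (v : Fin m → Fin m → ℝ) :
    ∑ i, ∑ j, p i * p j / 8 * (u i + u j - 2 * v i j)
      = (∑ i, p i * u i) / 4 - (∑ i, ∑ j, p i * p j * v i j) / 4 := by
  have key : ∀ i j : Fin m, p i * p j / 8 * (u i + u j - 2 * v i j)
      = (p i * u i / 8) * p j + p i * (p j * u j / 8) - (p i * p j * v i j) / 4 := by
    intro i j; ring
  simp_rw [key, Finset.sum_sub_distrib, Finset.sum_add_distrib]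
  rw [← Finset.sum_mul_sum, ← Finset.sum_mul_sum, hp1]
  simp_rw [div_eq_mul_inv, ← Finset.sum_mul]
  ring

lemma abstract_bound {E : Type*} [NormedAddCommGroup E] [InnerProductSpace ℂ E]
    {m : ℕ} (p : Fin m → ℝ) (hp0 : ∀ i, 0 ≤ p i) (hp1 : ∑ i, p i = 1)
    (x1 x2 : Fin m → E) (ε : ℝ)
    (hb : ∀ i, ‖x1 i‖ ^ 2 + ‖x2 i‖ ^ 2 ≤ 2 * ε) :
    ∑ i, p i / 4 * ‖x1 i + x2 i‖ ^ 2
      + 1 / 4 * ‖(∑ i, (p i : ℂ) • x1 i) + ∑ i, (p i : ℂ) • x2 i‖ ^ 2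
      + ∑ i, ∑ j, p i * p j / 8 * ‖(x1 i - x2 i) - (x1 j - x2 j)‖ ^ 2
    ≤ ε + (⟪∑ i, (p i : ℂ) • x1 i, ∑ i, (p i : ℂ) • x2 i⟫).re := by
  set y1 := ∑ i, (p i : ℂ) • x1 i with hy1
  set y2 := ∑ i, (p i : ℂ) • x2 i with hy2
  have hnre : ∀ z : ℂ, RCLike.re z = z.re := fun z => rfl
  have h1 : ‖y1 + y2‖ ^ 2 = ‖y1‖ ^ 2 + 2 * (⟪y1, y2⟫).re + ‖y2‖ ^ 2 := by
    have := norm_add_sq (𝕜 := ℂ) y1 y2; rw [hnre] at this; exact this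
  have hd : ∀ i j : Fin m, ‖(x1 i - x2 i) - (x1 j - x2 j)‖ ^ 2
      = ‖x1 i - x2 i‖ ^ 2 + ‖x1 j - x2 j‖ ^ 2
        - 2 * (⟪x1 i - x2 i, x1 j - x2 j⟫).re := by
    intro i j
    have := norm_sub_sq (𝕜 := ℂ) (x1 i - x2 i) (x1 j - x2 j); rw [hnre] at this
    linarith [this]
  have hyd : y1 - y2 = ∑ i, (p i : ℂ) • (x1 i - x2 i) := by
    rw [hy1, hy2, ← Finset.sum_sub_distrib]
    exact Finset.sum_congr rfl fun i _ => (smul_sub _ _ _).symm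
  have hnd : ‖y1 - y2‖ ^ 2
      = ∑ i, ∑ j, p i * p j * (⟪x1 i - x2 i, x1 j - x2 j⟫).re := by
    rw [hyd, ← re_inner_sum p p (fun i => x1 i - x2 i) (fun i => x1 i - x2 i)]
    rw [← hnre, inner_self_eq_norm_sq]
  have h2 : ∑ i, ∑ j, p i * p j / 8 * ‖(x1 i - x2 i) - (x1 j - x2 j)‖ ^ 2
      = (∑ i, p i * ‖x1 i - x2 i‖ ^ 2) / 4 - ‖y1 - y2‖ ^ 2 / 4 := by
    simp_rw [hd]
    rw [double_sum_eq p hp1 (fun i => ‖x1 i - x2 i‖ ^ 2)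
      (fun i j => (⟪x1 i - x2 i, x1 j - x2 j⟫).re), hnd]
  have h3 : ‖y1 - y2‖ ^ 2 = ‖y1‖ ^ 2 - 2 * (⟪y1, y2⟫).re + ‖y2‖ ^ 2 := by
    have := norm_sub_sq (𝕜 := ℂ) y1 y2; rw [hnre] at this; exact this
  have h4 : ∀ i : Fin m, p i / 4 * ‖x1 i + x2 i‖ ^ 2 + p i * ‖x1 i - x2 i‖ ^ 2 / 4
      = p i / 2 * (‖x1 i‖ ^ 2 + ‖x2 i‖ ^ 2) := by
    intro i
    have ha := norm_add_sq (𝕜 := ℂ) (x1 i) (x2 i)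
    have hs := norm_sub_sq (𝕜 := ℂ) (x1 i) (x2 i)
    rw [hnre] at ha hs
    rw [ha, hs]; ring
  have h5 : ∑ i, p i / 2 * (‖x1 i‖ ^ 2 + ‖x2 i‖ ^ 2) ≤ ε := by
    calc ∑ i, p i / 2 * (‖x1 i‖ ^ 2 + ‖x2 i‖ ^ 2)
        ≤ ∑ i, p i / 2 * (2 * ε) := by
          refine Finset.sum_le_sum fun i _ => ?_
          exact mul_le_mul_of_nonneg_left (hb i) (by linarith [hp0 i])
      _ = ε := by
          rw [← Finset.sum_mul]
          rw [show ∑ i, p i / 2 = (∑ i, p i) / 2 by rw [Finset.sum_div], hp1]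
          ring
  have hsplit : ∑ i, p i / 4 * ‖x1 i + x2 i‖ ^ 2 + (∑ i, p i * ‖x1 i - x2 i‖ ^ 2) / 4
      = ∑ i, p i / 2 * (‖x1 i‖ ^ 2 + ‖x2 i‖ ^ 2) := by
    rw [Finset.sum_div, ← Finset.sum_add_distrib]
    exact Finset.sum_congr rfl fun i _ => h4 i
  rw [h2, h1, h3]
  linarith [h5, hsplit]

section T
variable {NA NB : ℕ} {σ : ℂ →+* ℂ}
  (F : Matrix (Fin NA) (Fin NA) ℂ →ₛₗ[σ] Matrix (Fin NA) (Fin NA) ℂ)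
  (G : Matrix (Fin NB) (Fin NB) ℂ →ₛₗ[σ] Matrix (Fin NB) (Fin NB) ℂ)

lemma kron_sum_right {ι : Type*} (s : Finset ι) (X : Matrix (Fin NA) (Fin NA) ℂ)
    (f : ι → Matrix (Fin NB) (Fin NB) ℂ) :
    X ⊗ₖ (∑ i ∈ s, f i) = ∑ i ∈ s, X ⊗ₖ f i := by
  ext ⟨a, b⟩ ⟨a', b'⟩
  simp [Matrix.kroneckerMap_apply, Matrix.sum_apply, Finset.mul_sum]

lemma tensorApply_add (M N : Matrix (Fin NA × Fin NB) (Fin NA × Fin NB) ℂ) :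
    tensorApply F G (M + N) = tensorApply F G M + tensorApply F G N := by
  unfold tensorApply
  rw [← Finset.sum_add_distrib]
  refine Finset.sum_congr rfl fun b _ => ?_
  rw [← Finset.sum_add_distrib]
  refine Finset.sum_congr rfl fun b' _ => ?_
  rw [show (Matrix.of fun i i' => (M + N) (i, b) (i', b'))
      = (Matrix.of fun i i' => M (i, b) (i', b')) + (Matrix.of fun i i' => N (i, b) (i', b'))
      from rfl, map_add, Matrix.add_kronecker]

lemma tensorApply_zero : tensorApply F G (0 : Matrix (Fin NA × Fin NB) (Fin NA × Fin NB) ℂ) = 0 := by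
  unfold tensorApply
  have h0 : (Matrix.of fun (i i' : Fin NA) => (0 : ℂ)) = (0 : Matrix (Fin NA) (Fin NA) ℂ) := rfl
  simp [h0, Matrix.zero_kronecker]

lemma tensorApply_sum {ι : Type*} (s : Finset ι)
    (f : ι → Matrix (Fin NA × Fin NB) (Fin NA × Fin NB) ℂ) :
    tensorApply F G (∑ i ∈ s, f i) = ∑ i ∈ s, tensorApply F G (f i) := by
  induction s using Finset.cons_induction with
  | empty => simpa using tensorApply_zero F G
  | cons a s ha ih => rw [Finset.sum_cons, Finset.sum_cons, tensorApply_add, ih]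

lemma tensorApply_smul (c : ℂ) (M : Matrix (Fin NA × Fin NB) (Fin NA × Fin NB) ℂ) :
    tensorApply F G (c • M) = σ c • tensorApply F G M := by
  unfold tensorApply
  rw [Finset.smul_sum]
  refine Finset.sum_congr rfl fun b _ => ?_
  rw [Finset.smul_sum]
  refine Finset.sum_congr rfl fun b' _ => ?_
  rw [show (Matrix.of fun i i' => (c • M) (i, b) (i', b'))
      = c • (Matrix.of fun i i' => M (i, b) (i', b')) from rfl, map_smulₛₗ,
    Matrix.smul_kronecker]

lemma tensorApply_kron (A : Matrix (Fin NA) (Fin NA) ℂ) (B : Matrix (Fin NB) (Fin NB) ℂ) :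
    tensorApply F G (A ⊗ₖ B) = F A ⊗ₖ G B := by
  unfold tensorApply
  have hblock : ∀ b b' : Fin NB,
      (Matrix.of fun i i' => (A ⊗ₖ B) (i, b) (i', b')) = B b b' • A := by
    intro b b'; ext i i'
    simp [Matrix.kroneckerMap_apply, mul_comm]
  have hGB : G B = ∑ b : Fin NB, ∑ b' : Fin NB,
      σ (B b b') • G (Matrix.single b b' 1) := by
    conv_lhs => rw [Matrix.matrix_eq_sum_single B]
    rw [map_sum]
    refine Finset.sum_congr rfl fun b _ => ?_
    rw [map_sum]
    refine Finset.sum_congr rfl fun b' _ => ?_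
    rw [show Matrix.single b b' (B b b') = B b b' • Matrix.single b b' 1 by
      rw [Matrix.smul_single, smul_eq_mul, mul_one], map_smulₛₗ]
  rw [hGB, kron_sum_right]
  refine Finset.sum_congr rfl fun b _ => ?_
  rw [kron_sum_right]
  refine Finset.sum_congr rfl fun b' _ => ?_
  rw [hblock, map_smulₛₗ, Matrix.smul_kronecker, Matrix.kronecker_smul]

end T

lemma ccn_le_decomp {NA NB : ℕ} (C : Matrix (Fin NA × Fin NB) (Fin NA × Fin NB) ℂ)
    {ι : Type*} [Fintype ι] (A : ι → Matrix (Fin NA) (Fin NA) ℂ)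
    (B : ι → Matrix (Fin NB) (Fin NB) ℂ) (h : C = ∑ k : ι, A k ⊗ₖ B k) :
    ccn C ≤ ∑ k : ι, hsNorm (A k) * hsNorm (B k) := by
  have e := Fintype.equivFin ι
  have hmem : (∑ k : ι, hsNorm (A k) * hsNorm (B k)) ∈
      { r : ℝ | ∃ (n : ℕ) (A' : Fin n → Matrix (Fin NA) (Fin NA) ℂ)
        (B' : Fin n → Matrix (Fin NB) (Fin NB) ℂ),
        C = ∑ k, A' k ⊗ₖ B' k ∧ r = ∑ k, hsNorm (A' k) * hsNorm (B' k) } := by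
    refine ⟨Fintype.card ι, A ∘ e.symm, B ∘ e.symm, ?_, ?_⟩
    · rw [h]; exact Fintype.sum_equiv e _ _ (fun k => by simp)
    · exact Fintype.sum_equiv e _ _ (fun k => by simp)
  refine csInf_le ⟨0, ?_⟩ hmem
  rintro r ⟨n, A', B', -, rfl⟩
  exact Finset.sum_nonneg fun k _ => mul_nonneg (hsNorm_nonneg _) (hsNorm_nonneg _)

lemma margA_sep {NA NB m : ℕ} (p : Fin m → ℝ)
    (ρA : Fin m → Matrix (Fin NA) (Fin NA) ℂ) (ρB : Fin m → Matrix (Fin NB) (Fin NB) ℂ)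
    (htr : ∀ i, (ρB i).trace = 1) :
    margA (∑ i, (p i : ℂ) • (ρA i ⊗ₖ ρB i)) = ∑ i, (p i : ℂ) • ρA i := by
  ext i i'
  simp only [margA, Matrix.of_apply, Matrix.sum_apply, Matrix.smul_apply,
    Matrix.kroneckerMap_apply, smul_eq_mul]
  rw [Finset.sum_comm]
  refine Finset.sum_congr rfl fun k _ => ?_
  have : ∑ b : Fin NB, (p k : ℂ) * (ρA k i i' * ρB k b b)
      = (p k : ℂ) * ρA k i i' * ∑ b : Fin NB, ρB k b b := by
    rw [Finset.mul_sum]; exact Finset.sum_congr rfl fun b _ => by ring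
  rw [this, show ∑ b : Fin NB, ρB k b b = (ρB k).trace from rfl, htr, mul_one]

lemma margB_sep {NA NB m : ℕ} (p : Fin m → ℝ)
    (ρA : Fin m → Matrix (Fin NA) (Fin NA) ℂ) (ρB : Fin m → Matrix (Fin NB) (Fin NB) ℂ)
    (htr : ∀ i, (ρA i).trace = 1) :
    margB (∑ i, (p i : ℂ) • (ρA i ⊗ₖ ρB i)) = ∑ i, (p i : ℂ) • ρB i := by
  ext b b'
  simp only [margB, Matrix.of_apply, Matrix.sum_apply, Matrix.smul_apply,
    Matrix.kroneckerMap_apply, smul_eq_mul]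
  rw [Finset.sum_comm]
  refine Finset.sum_congr rfl fun k _ => ?_
  have : ∑ i : Fin NA, (p k : ℂ) * (ρA k i i * ρB k b b')
      = (p k : ℂ) * ρB k b b' * ∑ i : Fin NA, ρA k i i := by
    rw [Finset.mul_sum]; exact Finset.sum_congr rfl fun i _ => by ring
  rw [this, show ∑ i : Fin NA, ρA k i i = (ρA k).trace from rfl, htr, mul_one]

lemma scalar_key {m : ℕ} (q : Fin m → ℂ) (hq : ∑ i, q i = 1) (u1 u2 v1 v2 : Fin m → ℂ) :
    2⁻¹ * (∑ i, q i * (u1 i * v1 i) + ∑ i, q i * (u2 i * v2 i))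
      + 2⁻¹ * ((∑ i, q i * u1 i) * ∑ i, q i * v2 i + (∑ i, q i * u2 i) * ∑ i, q i * v1 i)
    = ∑ i, q i / 4 * (u1 i + u2 i) * (v1 i + v2 i)
      + 4⁻¹ * (∑ i, q i * u1 i + ∑ i, q i * u2 i) * (∑ i, q i * v1 i + ∑ i, q i * v2 i)
      + ∑ i, ∑ j, q i * q j / 8 * (u1 i - u2 i - (u1 j - u2 j))
          * (v1 i - v2 i - (v1 j - v2 j)) := by
  have key : ∀ i j : Fin m, q i * q j / 8 * (u1 i - u2 i - (u1 j - u2 j))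
          * (v1 i - v2 i - (v1 j - v2 j))
      = (q i * ((u1 i - u2 i) * (v1 i - v2 i)) / 8) * q j
        + q i * (q j * ((u1 j - u2 j) * (v1 j - v2 j)) / 8)
        - (q i * (u1 i - u2 i) / 8) * (q j * (v1 j - v2 j))
        - (q i * (v1 i - v2 i) / 8) * (q j * (u1 j - u2 j)) := by
    intro i j; ring
  simp_rw [key, Finset.sum_sub_distrib, Finset.sum_add_distrib]
  rw [← Finset.sum_mul_sum, ← Finset.sum_mul_sum, ← Finset.sum_mul_sum, ← Finset.sum_mul_sum, hq]
  have E1 : ∀ i, q i / 4 * (u1 i + u2 i) * (v1 i + v2 i)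
      = q i * (u1 i * v1 i) / 4 + q i * (u1 i * v2 i) / 4
        + q i * (u2 i * v1 i) / 4 + q i * (u2 i * v2 i) / 4 := by intro i; ring
  have E2 : ∀ i, q i * ((u1 i - u2 i) * (v1 i - v2 i)) / 8
      = q i * (u1 i * v1 i) / 8 - q i * (u1 i * v2 i) / 8
        - q i * (u2 i * v1 i) / 8 + q i * (u2 i * v2 i) / 8 := by intro i; ring
  have E3 : ∀ i, q i * (u1 i - u2 i) / 8 = q i * u1 i / 8 - q i * u2 i / 8 := by intro i; ring
  have E3' : ∀ i, q i * (v1 i - v2 i) / 8 = q i * v1 i / 8 - q i * v2 i / 8 := by intro i; ring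
  have E4 : ∀ i, q i * (v1 i - v2 i) = q i * v1 i - q i * v2 i := by intro i; ring
  have E4' : ∀ i, q i * (u1 i - u2 i) = q i * u1 i - q i * u2 i := by intro i; ring
  simp_rw [E1, E2, E3, E3', E4, E4', Finset.sum_add_distrib, Finset.sum_sub_distrib,
    ← Finset.sum_div]
  ring

lemma decomp_identity {NA NB m : ℕ} (p : Fin m → ℝ) (hp : ∑ i, (p i : ℂ) = 1)
    (a1 a2 : Fin m → Matrix (Fin NA) (Fin NA) ℂ) (b1 b2 : Fin m → Matrix (Fin NB) (Fin NB) ℂ) :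
    (2:ℂ)⁻¹ • ((∑ i, (p i:ℂ) • (a1 i ⊗ₖ b1 i)) + ∑ i, (p i:ℂ) • (a2 i ⊗ₖ b2 i))
    + (2:ℂ)⁻¹ • ((∑ i, (p i:ℂ) • a1 i) ⊗ₖ (∑ i, (p i:ℂ) • b2 i)
        + (∑ i, (p i:ℂ) • a2 i) ⊗ₖ (∑ i, (p i:ℂ) • b1 i))
    = (∑ i, (((p i:ℂ)/4) • (a1 i + a2 i)) ⊗ₖ (b1 i + b2 i))
      + ((4:ℂ)⁻¹ • ((∑ i, (p i:ℂ) • a1 i) + ∑ i, (p i:ℂ) • a2 i))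
          ⊗ₖ ((∑ i, (p i:ℂ) • b1 i) + ∑ i, (p i:ℂ) • b2 i)
      + ∑ i, ∑ j, (((p i:ℂ) * (p j:ℂ) / 8) • ((a1 i - a2 i) - (a1 j - a2 j)))
          ⊗ₖ ((b1 i - b2 i) - (b1 j - b2 j)) := by
  ext ⟨ia, ib⟩ ⟨ja, jb⟩
  simp only [Matrix.add_apply, Matrix.smul_apply, Matrix.sum_apply, Matrix.kroneckerMap_apply,
    Matrix.sub_apply, smul_eq_mul]
  exact scalar_key (fun i => (p i : ℂ)) hp (fun i => a1 i ia ja) (fun i => a2 i ia ja)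
    (fun i => b1 i ib jb) (fun i => b2 i ib jb)
/-- The n = 2 case of the main theorem. -/
theorem stmt15_main_theorem_two_maps {NA NB : ℕ} (hA : 2 ≤ NA) (hB : 2 ≤ NB)
    (σ : ℂ →+* ℂ) (hσ : σ = RingHom.id ℂ ∨ σ = starRingEnd ℂ)
    (EA1 EA2 : Matrix (Fin NA) (Fin NA) ℂ →ₛₗ[σ] Matrix (Fin NA) (Fin NA) ℂ)
    (EB1 EB2 : Matrix (Fin NB) (Fin NB) ℂ →ₛₗ[σ] Matrix (Fin NB) (Fin NB) ℂ)
    (εA εB : ℝ) (hεA : 0 ≤ εA) (hεB : 0 ≤ εB)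
    (hboundA : ∀ σ1 σ2 : Matrix (Fin NA) (Fin NA) ℂ, IsDensity σ1 → IsDensity σ2 →
      hsNorm (EA1 σ1) ^ 2 + hsNorm (EA2 σ2) ^ 2 ≤ 2 * εA)
    (hboundB : ∀ σ1 σ2 : Matrix (Fin NB) (Fin NB) ℂ, IsDensity σ1 → IsDensity σ2 →
      hsNorm (EB1 σ1) ^ 2 + hsNorm (EB2 σ2) ^ 2 ≤ 2 * εB)
    (ρ : Matrix (Fin NA × Fin NB) (Fin NA × Fin NB) ℂ)
    (hsep : IsSeparableState ρ) :
    ccn ((2 : ℂ)⁻¹ • (tensorApply EA1 EB1 ρ + tensorApply EA2 EB2 ρ)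
        + (2 : ℂ)⁻¹ • (tensorApply EA1 EB2 (margA ρ ⊗ₖ margB ρ)
            + tensorApply EA2 EB1 (margA ρ ⊗ₖ margB ρ)))
      ≤ Real.sqrt (εA + (hsInner (EA1 (margA ρ)) (EA2 (margA ρ))).re)
          * Real.sqrt (εB + (hsInner (EB1 (margB ρ)) (EB2 (margB ρ))).re) := by
  obtain ⟨m, p, ρA, ρB, hp0, hp1, hdA, hdB, hρ⟩ := hsep
  have hp0' : ∀ i, 0 ≤ p i := fun i => (hp0 i).le
  have hσr : ∀ r : ℝ, σ (r : ℂ) = (r : ℂ) := by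
    rcases hσ with h | h <;> simp [h, Complex.conj_ofReal]
  have hpc : ∑ i, (p i : ℂ) = 1 := by exact_mod_cast congrArg Complex.ofReal hp1
  have hmA : margA ρ = ∑ i, (p i : ℂ) • ρA i := by
    rw [hρ]; exact margA_sep p ρA ρB (fun i => (hdB i).2)
  have hmB : margB ρ = ∑ i, (p i : ℂ) • ρB i := by
    rw [hρ]; exact margB_sep p ρA ρB (fun i => (hdA i).2)
  have hEA1m : EA1 (margA ρ) = ∑ i, (p i : ℂ) • EA1 (ρA i) := by
    rw [hmA, map_sum]; exact Finset.sum_congr rfl fun i _ => by rw [map_smulₛₗ, hσr]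
  have hEA2m : EA2 (margA ρ) = ∑ i, (p i : ℂ) • EA2 (ρA i) := by
    rw [hmA, map_sum]; exact Finset.sum_congr rfl fun i _ => by rw [map_smulₛₗ, hσr]
  have hEB1m : EB1 (margB ρ) = ∑ i, (p i : ℂ) • EB1 (ρB i) := by
    rw [hmB, map_sum]; exact Finset.sum_congr rfl fun i _ => by rw [map_smulₛₗ, hσr]
  have hEB2m : EB2 (margB ρ) = ∑ i, (p i : ℂ) • EB2 (ρB i) := by
    rw [hmB, map_sum]; exact Finset.sum_congr rfl fun i _ => by rw [map_smulₛₗ, hσr]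
  have hT11 : tensorApply EA1 EB1 ρ = ∑ i, (p i : ℂ) • (EA1 (ρA i) ⊗ₖ EB1 (ρB i)) := by
    rw [hρ, tensorApply_sum]
    exact Finset.sum_congr rfl fun i _ => by rw [tensorApply_smul, hσr, tensorApply_kron]
  have hT22 : tensorApply EA2 EB2 ρ = ∑ i, (p i : ℂ) • (EA2 (ρA i) ⊗ₖ EB2 (ρB i)) := by
    rw [hρ, tensorApply_sum]
    exact Finset.sum_congr rfl fun i _ => by rw [tensorApply_smul, hσr, tensorApply_kron]
  have hT12 : tensorApply EA1 EB2 (margA ρ ⊗ₖ margB ρ)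
      = (∑ i, (p i : ℂ) • EA1 (ρA i)) ⊗ₖ (∑ i, (p i : ℂ) • EB2 (ρB i)) := by
    rw [tensorApply_kron, hEA1m, hEB2m]
  have hT21 : tensorApply EA2 EB1 (margA ρ ⊗ₖ margB ρ)
      = (∑ i, (p i : ℂ) • EA2 (ρA i)) ⊗ₖ (∑ i, (p i : ℂ) • EB1 (ρB i)) := by
    rw [tensorApply_kron, hEA2m, hEB1m]
  -- the decomposition
  set AA : (Fin m ⊕ Unit ⊕ Fin m × Fin m) → Matrix (Fin NA) (Fin NA) ℂ :=
    Sum.elim (fun i => ((p i : ℂ) / 4) • (EA1 (ρA i) + EA2 (ρA i)))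
      (Sum.elim (fun _ => (4:ℂ)⁻¹ • ((∑ i, (p i : ℂ) • EA1 (ρA i)) + ∑ i, (p i : ℂ) • EA2 (ρA i)))
        (fun ij => ((p ij.1 : ℂ) * (p ij.2 : ℂ) / 8) •
          ((EA1 (ρA ij.1) - EA2 (ρA ij.1)) - (EA1 (ρA ij.2) - EA2 (ρA ij.2))))) with hAA
  set BB : (Fin m ⊕ Unit ⊕ Fin m × Fin m) → Matrix (Fin NB) (Fin NB) ℂ :=
    Sum.elim (fun i => EB1 (ρB i) + EB2 (ρB i))
      (Sum.elim (fun _ => (∑ i, (p i : ℂ) • EB1 (ρB i)) + ∑ i, (p i : ℂ) • EB2 (ρB i))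
        (fun ij => (EB1 (ρB ij.1) - EB2 (ρB ij.1)) - (EB1 (ρB ij.2) - EB2 (ρB ij.2)))) with hBB
  have hC : (2 : ℂ)⁻¹ • (tensorApply EA1 EB1 ρ + tensorApply EA2 EB2 ρ)
        + (2 : ℂ)⁻¹ • (tensorApply EA1 EB2 (margA ρ ⊗ₖ margB ρ)
            + tensorApply EA2 EB1 (margA ρ ⊗ₖ margB ρ))
      = ∑ k, AA k ⊗ₖ BB k := by
    rw [hT11, hT22, hT12, hT21,
      decomp_identity p hpc (fun i => EA1 (ρA i)) (fun i => EA2 (ρA i))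
        (fun i => EB1 (ρB i)) (fun i => EB2 (ρB i)),
      Fintype.sum_sum_type, Fintype.sum_sum_type, Fintype.sum_prod_type]
    simp only [Fintype.sum_unique, hAA, hBB, Sum.elim_inl, Sum.elim_inr]
    rw [add_assoc]
  refine le_trans (ccn_le_decomp _ AA BB hC) ?_
  -- Cauchy-Schwarz step
  set F : (Fin m ⊕ Unit ⊕ Fin m × Fin m) → ℝ :=
    Sum.elim (fun i => Real.sqrt (p i) / 2 * hsNorm (EA1 (ρA i) + EA2 (ρA i)))
      (Sum.elim (fun _ => 1 / 2 *
          hsNorm ((∑ i, (p i : ℂ) • EA1 (ρA i)) + ∑ i, (p i : ℂ) • EA2 (ρA i)))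
        (fun ij => Real.sqrt (p ij.1 * p ij.2 / 8) *
          hsNorm ((EA1 (ρA ij.1) - EA2 (ρA ij.1)) - (EA1 (ρA ij.2) - EA2 (ρA ij.2))))) with hF
  set G : (Fin m ⊕ Unit ⊕ Fin m × Fin m) → ℝ :=
    Sum.elim (fun i => Real.sqrt (p i) / 2 * hsNorm (EB1 (ρB i) + EB2 (ρB i)))
      (Sum.elim (fun _ => 1 / 2 *
          hsNorm ((∑ i, (p i : ℂ) • EB1 (ρB i)) + ∑ i, (p i : ℂ) • EB2 (ρB i)))
        (fun ij => Real.sqrt (p ij.1 * p ij.2 / 8) *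
          hsNorm ((EB1 (ρB ij.1) - EB2 (ρB ij.1)) - (EB1 (ρB ij.2) - EB2 (ρB ij.2))))) with hG
  have hFG : ∀ k, hsNorm (AA k) * hsNorm (BB k) = F k * G k := by
    rintro (i | ⟨⟩ | ⟨i, j⟩)
    · simp only [hAA, hBB, hF, hG, Sum.elim_inl]
      rw [show ((p i : ℂ) / 4) = ((p i / 4 : ℝ) : ℂ) by push_cast; ring,
        hsNorm_smul_real _ (by linarith [hp0' i])]
      have hs : Real.sqrt (p i) * Real.sqrt (p i) = p i := Real.mul_self_sqrt (hp0' i)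
      rw [show Real.sqrt (p i) / 2 * hsNorm (EA1 (ρA i) + EA2 (ρA i))
          * (Real.sqrt (p i) / 2 * hsNorm (EB1 (ρB i) + EB2 (ρB i)))
          = Real.sqrt (p i) * Real.sqrt (p i)
            * (hsNorm (EA1 (ρA i) + EA2 (ρA i)) * hsNorm (EB1 (ρB i) + EB2 (ρB i))) / 4
          by ring, hs]
      ring
    · simp only [hAA, hBB, hF, hG, Sum.elim_inr, Sum.elim_inl]
      rw [show ((4:ℂ)⁻¹) = ((1 / 4 : ℝ) : ℂ) by norm_num,
        hsNorm_smul_real _ (by norm_num)]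
      ring
    · simp only [hAA, hBB, hF, hG, Sum.elim_inr]
      have hc : (0:ℝ) ≤ p i * p j / 8 := by
        have := mul_nonneg (hp0' i) (hp0' j); linarith
      rw [show ((p i : ℂ) * (p j : ℂ) / 8) = ((p i * p j / 8 : ℝ) : ℂ) by push_cast; ring,
        hsNorm_smul_real _ hc]
      have hs : Real.sqrt (p i * p j / 8) * Real.sqrt (p i * p j / 8) = p i * p j / 8 :=
        Real.mul_self_sqrt hc
      rw [show Real.sqrt (p i * p j / 8)
            * hsNorm ((EA1 (ρA i) - EA2 (ρA i)) - (EA1 (ρA j) - EA2 (ρA j)))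
          * (Real.sqrt (p i * p j / 8)
            * hsNorm ((EB1 (ρB i) - EB2 (ρB i)) - (EB1 (ρB j) - EB2 (ρB j))))
          = Real.sqrt (p i * p j / 8) * Real.sqrt (p i * p j / 8)
            * (hsNorm ((EA1 (ρA i) - EA2 (ρA i)) - (EA1 (ρA j) - EA2 (ρA j)))
              * hsNorm ((EB1 (ρB i) - EB2 (ρB i)) - (EB1 (ρB j) - EB2 (ρB j))))
          by ring, hs]
      ring
  have hF2 : ∑ k, F k ^ 2 ≤ εA + (hsInner (EA1 (margA ρ)) (EA2 (margA ρ))).re := by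
    have hx : ∀ i, ‖eM (EA1 (ρA i))‖ ^ 2 + ‖eM (EA2 (ρA i))‖ ^ 2 ≤ 2 * εA := by
      intro i
      rw [← hsNorm_eM, ← hsNorm_eM]
      exact hboundA _ _ (hdA i) (hdA i)
    have hab := abstract_bound p hp0' hp1 (fun i => eM (EA1 (ρA i)))
      (fun i => eM (EA2 (ρA i))) εA hx
    have hcA : (hsInner (EA1 (margA ρ)) (EA2 (margA ρ))).re
        = (inner ℂ (∑ i, (p i : ℂ) • eM (EA1 (ρA i))) (∑ i, (p i : ℂ) • eM (EA2 (ρA i)))).re := by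
      rw [hsInner_eM, hEA1m, hEA2m, eM_sum, eM_sum]
      simp only [eM_smul]
    rw [hcA]
    refine le_trans (le_of_eq ?_) hab
    rw [Fintype.sum_sum_type, Fintype.sum_sum_type, Fintype.sum_prod_type]
    simp only [Fintype.sum_unique, hF, Sum.elim_inl, Sum.elim_inr]
    rw [add_assoc]
    congr 1
    · refine Finset.sum_congr rfl fun i _ => ?_
      rw [hsNorm_eM, eM_add, mul_pow, div_pow, Real.sq_sqrt (hp0' i)]
      ring
    congr 1
    · rw [hsNorm_eM, eM_add, eM_sum, eM_sum]
      simp only [eM_smul]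
      rw [mul_pow]
      norm_num
    · refine Finset.sum_congr rfl fun i _ => ?_
      refine Finset.sum_congr rfl fun j _ => ?_
      rw [hsNorm_eM, eM_sub, eM_sub, eM_sub, mul_pow,
        Real.sq_sqrt (by have := mul_nonneg (hp0' i) (hp0' j); linarith : (0:ℝ) ≤ p i * p j / 8)]
  have hG2 : ∑ k, G k ^ 2 ≤ εB + (hsInner (EB1 (margB ρ)) (EB2 (margB ρ))).re := by
    have hx : ∀ i, ‖eM (EB1 (ρB i))‖ ^ 2 + ‖eM (EB2 (ρB i))‖ ^ 2 ≤ 2 * εB := by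
      intro i
      rw [← hsNorm_eM, ← hsNorm_eM]
      exact hboundB _ _ (hdB i) (hdB i)
    have hab := abstract_bound p hp0' hp1 (fun i => eM (EB1 (ρB i)))
      (fun i => eM (EB2 (ρB i))) εB hx
    have hcB : (hsInner (EB1 (margB ρ)) (EB2 (margB ρ))).re
        = (inner ℂ (∑ i, (p i : ℂ) • eM (EB1 (ρB i))) (∑ i, (p i : ℂ) • eM (EB2 (ρB i)))).re := by
      rw [hsInner_eM, hEB1m, hEB2m, eM_sum, eM_sum]
      simp only [eM_smul]
    rw [hcB]
    refine le_trans (le_of_eq ?_) hab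
    rw [Fintype.sum_sum_type, Fintype.sum_sum_type, Fintype.sum_prod_type]
    simp only [Fintype.sum_unique, hG, Sum.elim_inl, Sum.elim_inr]
    rw [add_assoc]
    congr 1
    · refine Finset.sum_congr rfl fun i _ => ?_
      rw [hsNorm_eM, eM_add, mul_pow, div_pow, Real.sq_sqrt (hp0' i)]
      ring
    congr 1
    · rw [hsNorm_eM, eM_add, eM_sum, eM_sum]
      simp only [eM_smul]
      rw [mul_pow]
      norm_num
    · refine Finset.sum_congr rfl fun i _ => ?_
      refine Finset.sum_congr rfl fun j _ => ?_
      rw [hsNorm_eM, eM_sub, eM_sub, eM_sub, mul_pow,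
        Real.sq_sqrt (by have := mul_nonneg (hp0' i) (hp0' j); linarith : (0:ℝ) ≤ p i * p j / 8)]
  calc ∑ k, hsNorm (AA k) * hsNorm (BB k) = ∑ k, F k * G k :=
        Finset.sum_congr rfl fun k _ => hFG k
    _ ≤ Real.sqrt (∑ k, F k ^ 2) * Real.sqrt (∑ k, G k ^ 2) :=
        Real.sum_mul_le_sqrt_mul_sqrt _ F G
    _ ≤ Real.sqrt (εA + (hsInner (EA1 (margA ρ)) (EA2 (margA ρ))).re)
          * Real.sqrt (εB + (hsInner (EB1 (margB ρ)) (EB2 (margB ρ))).re) :=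
        mul_le_mul (Real.sqrt_le_sqrt hF2) (Real.sqrt_le_sqrt hG2)
          (Real.sqrt_nonneg _) (Real.sqrt_nonneg _)
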